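/- Let H be a finite graph with r := e(H) ≥ 1, p ∈ (0,1), η ∈ (0,1], and let Y be the random edge-indicator vector of G(n,p) conditioned on the event L_p(H,η). Then for every W ⊆ E(K_n): E[ Σ_{A ∈ H(H)−W} | E[Y_A | (Y_w)_{w∈W}] − Π_{a∈A} E[Y_a | (Y_w)_{w∈W}] | ] ≤ p^r · ( (r−1)·e(H(H)−W) )^{1/2} · E_H(W)^{1/2}. -/

import Mathlib

open scoped BigOperators

attribute [local instance] Classical.propDecidable

noncomputable section

namespace LowerTails

/-- The edge set of the complete graph `K_n`: unordered pairs of distinct elements of `Fin n`. -/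
abbrev Edge (n : ℕ) := {e : Sym2 (Fin n) // ¬ e.IsDiag}

/-- A graph on `[n]`, identified with its edge-indicator vector in `{0,1}^{E(K_n)}`. -/
abbrev EGraph (n : ℕ) := Edge n → Bool

/-- The probability of the configuration `G` under the product measure where edge `e`
is present independently with probability `q e`. -/
def wt {n : ℕ} (q : Edge n → ℝ) (G : EGraph n) : ℝ :=
  ∏ e : Edge n, if G e then q e else 1 - q e

/-- Probability of the event `S` under `G(n, q)`. -/
def pr {n : ℕ} (q : Edge n → ℝ) (S : Set (EGraph n)) : ℝ :=
  ∑ G : EGraph n, if G ∈ S then wt q G else 0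

/-- Conditional probability of `S` given `L` under `G(n, q)`. -/
def cpr {n : ℕ} (q : Edge n → ℝ) (L S : Set (EGraph n)) : ℝ :=
  pr q (S ∩ L) / pr q L

/-- Conditional expectation of `f` given the event `L` under `G(n, q)`. -/
def cex {n : ℕ} (q : Edge n → ℝ) (L : Set (EGraph n)) (f : EGraph n → ℝ) : ℝ :=
  (∑ G : EGraph n, if G ∈ L then wt q G * f G else 0) / pr q L

/-- The simple graph on `Fin n` associated to an edge-indicator vector. -/
def toSG {n : ℕ} (G : EGraph n) : SimpleGraph (Fin n) :=
  SimpleGraph.fromEdgeSet {e : Sym2 (Fin n) | ∃ h : ¬e.IsDiag, G ⟨e, h⟩ = true}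

/-- The number of copies of `H` in `G`, i.e. the number of subgraphs of `G` isomorphic to `H`. -/
def countCopies {k n : ℕ} (H : SimpleGraph (Fin k)) (G : SimpleGraph (Fin n)) : ℕ :=
  Set.ncard {K : G.Subgraph | Nonempty (H ≃g K.coe)}

/-- `N_H(G)` for an edge-indicator vector `G`, as a real number. -/
def NH {k n : ℕ} (H : SimpleGraph (Fin k)) (G : EGraph n) : ℝ :=
  countCopies H (toSG G)

/-- `E[N_H(q)]`, the expected number of copies of `H` in `G(n, q)`. -/
def expNH {k : ℕ} (H : SimpleGraph (Fin k)) {n : ℕ} (q : Edge n → ℝ) : ℝ :=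
  ∑ G : EGraph n, wt q G * NH H G

/-- `N_H(K_n)`, the number of copies of `H` in the complete graph `K_n`. -/
def NHKn {k : ℕ} (H : SimpleGraph (Fin k)) (n : ℕ) : ℝ :=
  countCopies H (⊤ : SimpleGraph (Fin n))

/-- The lower tail event `L_p(H, η) = {G : N_H(G) ≤ η E[N_H(p)]}`. -/
def lowerTail {k : ℕ} (H : SimpleGraph (Fin k)) (n : ℕ) (p η : ℝ) : Set (EGraph n) :=
  {G | NH H G ≤ η * expNH H (fun _ : Edge n => p)}

/-- `h(x) = x log x - x + 1` (with `h(0) = 1` since `Real.log 0 = 0`). -/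
def hfun (x : ℝ) : ℝ := x * Real.log x - x + 1

/-- The relative entropy `i_p(t)` of `Ber(t)` with respect to `Ber(p)`. -/
def ip (p t : ℝ) : ℝ := t * Real.log (t / p) + (1 - t) * Real.log ((1 - t) / (1 - p))

/-- The number of edges of `H` as a real number. -/
def eH {k : ℕ} (H : SimpleGraph (Fin k)) : ℝ := H.edgeSet.ncard

/-- The defining equation of the threshold `η_H`, for a graph with `e` edges. -/
def etaEq (e η : ℝ) : Prop :=
  hfun (η ^ (1 / η)) =
    hfun (η ^ (1 / e)) + η ^ (1 / e) * Real.log (η ^ (1 / e)) *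
      (Real.log (η ^ (1 / η)) - Real.log (η ^ (1 / e)))

/-- The 2-density `m_2(H)`. -/
def m2 {k : ℕ} (H : SimpleGraph (Fin k)) : ℝ :=
  sSup {x : ℝ | ∃ F : H.Subgraph, 2 ≤ F.edgeSet.ncard ∧
    x = ((F.edgeSet.ncard : ℝ) - 1) / ((F.verts.ncard : ℝ) - 2)}

/-- The variational problem `Φ_p(H, η)`. -/
def PhiP {k : ℕ} (H : SimpleGraph (Fin k)) (n : ℕ) (p η : ℝ) : ℝ :=
  sInf {x : ℝ | ∃ q : Edge n → ℝ, (∀ e, q e ∈ Set.Icc (0:ℝ) 1) ∧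
    expNH H q ≤ η * expNH H (fun _ : Edge n => p) ∧ x = ∑ e : Edge n, ip p (q e)}

/-- The sparse limit variational problem `Φ(H, η)`. -/
def Phi {k : ℕ} (H : SimpleGraph (Fin k)) (n : ℕ) (η : ℝ) : ℝ :=
  sInf {x : ℝ | ∃ q : Edge n → ℝ, (∀ e, q e ∈ Set.Icc (0:ℝ) 1) ∧
    expNH H q ≤ η * NHKn H n ∧ x = ∑ e : Edge n, hfun (q e)}

/-- The cut norm of an `n × n` real matrix. -/
def cutNorm {n : ℕ} (M : Matrix (Fin n) (Fin n) ℝ) : ℝ :=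
  sSup {x : ℝ | ∃ a b : Fin n → ℝ, (∀ i, a i ∈ Set.Icc (0:ℝ) 1) ∧ (∀ i, b i ∈ Set.Icc (0:ℝ) 1) ∧
    x = |∑ i : Fin n, ∑ j : Fin n, a i * M i j * b j| / (n : ℝ) ^ 2}

/-- The symmetric matrix with entries `q_{ij} - c` off the diagonal, `0` on the diagonal. -/
def devMat {n : ℕ} (q : Edge n → ℝ) (c : ℝ) : Matrix (Fin n) (Fin n) ℝ :=
  fun i j => if h : i = j then 0 else q ⟨s(i, j), by simp [Sym2.mk_isDiag_iff, h]⟩ - c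

/-- The edge-indicator vector of `G` as a real vector. -/
def ind {n : ℕ} (G : EGraph n) : Edge n → ℝ := fun e => if G e then 1 else 0

/-- `Y_A = ∏_{e ∈ A} Y_e`. -/
def YA {n : ℕ} (A : Finset (Edge n)) (G : EGraph n) : ℝ :=
  ∏ e ∈ A, (if G e then (1:ℝ) else 0)

/-- The event that a configuration agrees with `G0` on the set `W`. -/
def agreeOn {n : ℕ} (W : Finset (Edge n)) (G0 : EGraph n) : Set (EGraph n) :=
  {G | ∀ w ∈ W, G w = G0 w}

/-- The conditional expectation `E[f | (Y_w)_{w ∈ W}]` under the pmf `μ`, evaluated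
at the outcome `G0` (i.e. given that `Y` agrees with `G0` on `W`). -/
def condExpW {n : ℕ} (μ : EGraph n → ℝ) (W : Finset (Edge n)) (f : EGraph n → ℝ)
    (G0 : EGraph n) : ℝ :=
  (∑ G : EGraph n, if G ∈ agreeOn W G0 then μ G * f G else 0) /
    (∑ G : EGraph n, if G ∈ agreeOn W G0 then μ G else 0)

/-- The pmf of `G(n, p)` conditioned on the lower tail event `L_p(H, η)`. -/
def ltPMF {k : ℕ} (H : SimpleGraph (Fin k)) (n : ℕ) (p η : ℝ) : EGraph n → ℝ :=
  fun G => (if G ∈ lowerTail H n p η then wt (fun _ : Edge n => p) G else 0) /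
    pr (fun _ : Edge n => p) (lowerTail H n p η)

/-- The hyperedges of the hypergraph `H(H)`: edge sets of copies of `H` in `K_n`. -/
def copySets {k : ℕ} (H : SimpleGraph (Fin k)) (n : ℕ) : Finset (Finset (Edge n)) :=
  Finset.univ.filter (fun A => ∃ f : Fin k ↪ Fin n,
    ∀ e : Edge n, e ∈ A ↔ ∃ u v : Fin k, H.Adj u v ∧ (e : Sym2 (Fin n)) = s(f u, f v))

/-- The correlation `D_W(B, b)` as a random variable (a function of the outcome `G0`). -/
def DW {n : ℕ} (μ : EGraph n → ℝ) (W : Finset (Edge n)) (B : Finset (Edge n)) (b : Edge n)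
    (G0 : EGraph n) : ℝ :=
  condExpW μ W (YA B) G0 - condExpW μ W (YA (B.erase b)) G0 * condExpW μ W (YA {b}) G0

/-- The energy `E_H(W)` of a set `W` with respect to the pmf `μ`. -/
def energy {k n : ℕ} (H : SimpleGraph (Fin k)) (μ : EGraph n → ℝ) (p : ℝ)
    (W : Finset (Edge n)) : ℝ :=
  ∑ G0 : EGraph n, μ G0 *
    ∑ A ∈ (copySets H n).filter (fun A => Disjoint A W),
      ∑ B ∈ A.powerset.filter (fun B => 2 ≤ B.card),
        ∑ b ∈ B, (DW μ W B b G0) ^ 2 /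
          ((Nat.choose H.edgeSet.ncard B.card : ℝ) * (B.card : ℝ) * p ^ (2 * B.card))

end LowerTails

namespace LowerTails

instance subgraphFinite {n : ℕ} (G : SimpleGraph (Fin n)) : Finite G.Subgraph := by
  apply Finite.of_injective (fun K => (K.verts, K.Adj))
  intro a b hab
  ext <;> simp_all [Prod.ext_iff]

lemma countCopies_mono {k n : ℕ} (H : SimpleGraph (Fin k)) {G₁ G₂ : SimpleGraph (Fin n)}
    (h : G₁ ≤ G₂) : countCopies H G₁ ≤ countCopies H G₂ := by
  classical
  apply Set.ncard_le_ncard_of_injOn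
    (fun K => ⟨K.verts, K.Adj, fun ha => h (K.adj_sub ha), K.edge_vert, K.symm⟩)
  · rintro K ⟨e⟩
    exact ⟨e⟩
  · intro a _ b _ hab
    simp only [SimpleGraph.Subgraph.mk.injEq] at hab
    exact SimpleGraph.Subgraph.ext hab.1 hab.2

lemma toSG_mono {n : ℕ} {G₁ G₂ : EGraph n} (h : ∀ e, G₁ e = true → G₂ e = true) :
    toSG G₁ ≤ toSG G₂ := by
  apply SimpleGraph.fromEdgeSet_mono
  rintro e ⟨hd, hG⟩
  exact ⟨hd, h _ hG⟩

lemma NH_mono {k n : ℕ} (H : SimpleGraph (Fin k)) {G₁ G₂ : EGraph n}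
    (h : ∀ e, G₁ e = true → G₂ e = true) : NH H G₁ ≤ NH H G₂ :=
  Nat.cast_le.mpr (countCopies_mono H (toSG_mono h))

lemma wt_nonneg {n : ℕ} {p : ℝ} (hp : p ∈ Set.Ioo (0:ℝ) 1) (G : EGraph n) :
    0 ≤ wt (fun _ => p) G :=
  Finset.prod_nonneg fun e _ => by
    obtain ⟨h1, h2⟩ := hp; split <;> linarith

lemma pr_nonneg {n : ℕ} {p : ℝ} (hp : p ∈ Set.Ioo (0:ℝ) 1) (S : Set (EGraph n)) :
    0 ≤ pr (fun _ => p) S := by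
  apply Finset.sum_nonneg
  intro G _
  split
  · exact wt_nonneg hp G
  · exact le_refl 0


lemma ltPMF_nonneg {k n : ℕ} (H : SimpleGraph (Fin k)) {p : ℝ} (hp : p ∈ Set.Ioo (0:ℝ) 1)
    (η : ℝ) (G : EGraph n) : 0 ≤ ltPMF H n p η G := by
  apply div_nonneg _ (pr_nonneg hp _)
  split
  · exact wt_nonneg hp G
  · exact le_refl 0

lemma sum_ltPMF_le_one {k n : ℕ} (H : SimpleGraph (Fin k)) (p η : ℝ) :
    ∑ G : EGraph n, ltPMF H n p η G ≤ 1 := by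
  unfold ltPMF
  rw [← Finset.sum_div]
  rcases eq_or_ne (pr (fun _ : Edge n => p) (lowerTail H n p η)) 0 with h | h
  · rw [h, div_zero]; exact zero_le_one
  · rw [show (∑ G : EGraph n, if G ∈ lowerTail H n p η then wt (fun _ : Edge n => p) G else 0)
        = pr (fun _ : Edge n => p) (lowerTail H n p η) from rfl, div_self h]
lemma condExpW_edge_nonneg {n : ℕ} (μ : EGraph n → ℝ) (hμ : ∀ G, 0 ≤ μ G)
    (W : Finset (Edge n)) (a : Edge n) (G0 : EGraph n) :
    0 ≤ condExpW μ W (YA {a}) G0 := by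
  apply div_nonneg <;> apply Finset.sum_nonneg <;> intro G _
  · split
    · exact mul_nonneg (hμ G) (Finset.prod_nonneg fun e _ => by split <;> norm_num)
    · exact le_refl 0
  · split
    · exact hμ G
    · exact le_refl 0

lemma harris {k n : ℕ} (H : SimpleGraph (Fin k)) {p : ℝ} (hp : p ∈ Set.Ioo (0:ℝ) 1) (η : ℝ)
    (W : Finset (Edge n)) {a : Edge n} (ha : a ∉ W) (G0 : EGraph n) :
    condExpW (ltPMF H n p η) W (YA {a}) G0 ≤ p := by
  classical
  set L := lowerTail H n p η with hL
  set Z := pr (fun _ : Edge n => p) L with hZdef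
  set w := wt (fun _ : Edge n => p) with hwdef
  have hw : ∀ G : EGraph n, 0 ≤ w G := fun G => wt_nonneg hp G
  by_cases hZ : Z = 0
  · have hzero : ∀ G : EGraph n, ltPMF H n p η G = 0 := fun G => by
      rw [ltPMF, ← hL, ← hwdef, ← hZdef, hZ, div_zero]
    simp only [condExpW, hzero, zero_mul, ite_self, Finset.sum_const_zero]
    rw [zero_div]
    exact hp.1.le
  -- main case
  set T₁ : Finset (EGraph n) := Finset.univ.filter
    (fun G => G ∈ agreeOn W G0 ∧ G ∈ L ∧ G a = true) with hT₁
  set T₂ : Finset (EGraph n) := Finset.univ.filter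
    (fun G => G ∈ agreeOn W G0 ∧ G ∈ L ∧ G a = false) with hT₂
  set X := ∑ G ∈ T₁, w G with hX
  set Yv := ∑ G ∈ T₂, w G with hYv
  have hXnn : 0 ≤ X := Finset.sum_nonneg fun G _ => hw G
  have hYnn : 0 ≤ Yv := Finset.sum_nonneg fun G _ => hw G
  -- rewrite the conditional expectation as X / (X + Yv)
  have hnum : (∑ G : EGraph n, if G ∈ agreeOn W G0 then ltPMF H n p η G * YA {a} G else 0)
      = X / Z := by
    rw [hX, hT₁, Finset.sum_filter, Finset.sum_div]
    apply Finset.sum_congr rfl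
    intro G _
    rw [ltPMF, ← hL, ← hwdef, ← hZdef, YA, Finset.prod_singleton]
    by_cases h1 : G ∈ agreeOn W G0 <;> by_cases h2 : G ∈ L <;> by_cases h3 : G a = true <;>
      simp [h1, h2, h3, zero_div]
  have hden : (∑ G : EGraph n, if G ∈ agreeOn W G0 then ltPMF H n p η G else 0)
      = (X + Yv) / Z := by
    rw [hX, hYv, hT₁, hT₂, Finset.sum_filter, Finset.sum_filter, ← Finset.sum_add_distrib,
      Finset.sum_div]
    apply Finset.sum_congr rfl
    intro G _
    rw [ltPMF, ← hL, ← hwdef, ← hZdef]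
    by_cases h1 : G ∈ agreeOn W G0 <;> by_cases h2 : G ∈ L <;> by_cases h3 : G a = true <;>
      simp [h1, h2, h3, zero_div]
  have hEq : condExpW (ltPMF H n p η) W (YA {a}) G0 = X / (X + Yv) := by
    rw [condExpW, hnum, hden, div_div_eq_mul_div, div_mul_cancel₀ _ hZ]
  -- the key inequality via the injection G ↦ G[a := false]
  have hkey : (1 - p) * X ≤ p * Yv := by
    have hptwise : ∀ G ∈ T₁, (1 - p) * w G = p * w (Function.update G a false) := by
      intro G hG
      have hGa : G a = true := ((Finset.mem_filter.1 hG).2).2.2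
      have e1 : w G = p * ∏ e ∈ Finset.univ.erase a, (if G e then p else 1 - p) := by
        rw [hwdef, wt, ← Finset.mul_prod_erase Finset.univ _ (Finset.mem_univ a), hGa, if_pos rfl]
      have e2 : w (Function.update G a false)
          = (1 - p) * ∏ e ∈ Finset.univ.erase a, (if G e then p else 1 - p) := by
        rw [hwdef, wt, ← Finset.mul_prod_erase Finset.univ _ (Finset.mem_univ a),
          Function.update_self]
        simp only [Bool.false_eq_true, if_false]
        congr 1
        apply Finset.prod_congr rfl
        intro e he
        rw [Function.update_of_ne (Finset.ne_of_mem_erase he)]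
      rw [e1, e2]; ring
    calc (1 - p) * X = ∑ G ∈ T₁, p * w (Function.update G a false) := by
          rw [hX, Finset.mul_sum]; exact Finset.sum_congr rfl hptwise
      _ = p * ∑ G ∈ T₁, w (Function.update G a false) := by rw [Finset.mul_sum]
      _ = p * ∑ G' ∈ T₁.image (fun G => Function.update G a false), w G' := by
          congr 1
          rw [Finset.sum_image]
          intro x hx y hy hxy
          have hxa : x a = true := ((Finset.mem_filter.1 hx).2).2.2
          have hya : y a = true := ((Finset.mem_filter.1 hy).2).2.2
          funext e
          by_cases he : e = a
          · rw [he, hxa, hya]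
          · have := congrFun hxy e
            beta_reduce at this
            rwa [Function.update_of_ne he, Function.update_of_ne he] at this
      _ ≤ p * ∑ G' ∈ T₂, w G' := by
          apply mul_le_mul_of_nonneg_left _ hp.1.le
          apply Finset.sum_le_sum_of_subset_of_nonneg
          · intro G' hG'
            obtain ⟨G, hG, rfl⟩ := Finset.mem_image.1 hG'
            obtain ⟨-, hagree, hLmem, hGa⟩ := Finset.mem_filter.1 hG
            rw [hT₂, Finset.mem_filter]
            refine ⟨Finset.mem_univ _, ?_, ?_, Function.update_self a false G⟩
            · intro v hv
              rw [Function.update_of_ne (fun hva => ha (by rw [← hva]; exact hv))]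
              exact hagree v hv
            · rw [hL, lowerTail, Set.mem_setOf_eq] at hLmem ⊢
              refine le_trans (NH_mono H ?_) hLmem
              intro e hee
              by_cases he : e = a
              · rw [he, Function.update_self] at hee; exact absurd hee (by simp)
              · rwa [Function.update_of_ne he] at hee
          · intro G' _ _
            exact hw G'
      _ = p * Yv := by rw [hYv]
  rw [hEq]
  rcases eq_or_lt_of_le (add_nonneg hXnn hYnn) with h0 | h0
  · rw [← h0, div_zero]; exact hp.1.le
  · rw [div_le_iff₀ h0, mul_add]
    ring_nf at hkey ⊢
    linarith
lemma coeff_id {p : ℝ} (s t : ℕ) (ht : t ≤ s) (ht2 : 1 ≤ t) :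
    p ^ (s + 1 - t) / (((s+1).choose t : ℝ) * t)
      = (p / ((s:ℝ)+1)) * (((s + 1 - t : ℕ) : ℝ) * (p ^ (s - t) / ((s.choose t : ℝ) * t))) := by
  have c1 : (0:ℝ) < (s.choose t : ℝ) := Nat.cast_pos.2 (Nat.choose_pos ht)
  have c1' : (0:ℝ) < (((s+1).choose t : ℕ) : ℝ) :=
    Nat.cast_pos.2 (Nat.choose_pos (le_trans ht (Nat.le_succ s)))
  have c2 : (0:ℝ) < (t:ℝ) := Nat.cast_pos.2 (by omega)
  have c3 : (0:ℝ) < (s:ℝ)+1 := by positivity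
  have hpow : p ^ (s + 1 - t) = p ^ (s - t) * p := by
    rw [← pow_succ]; congr 1; omega
  have hch : ((s + 1 - t : ℕ):ℝ) * (((s+1).choose t : ℕ) : ℝ) = ((s:ℝ)+1) * (s.choose t : ℝ) := by
    have h' : ((s.choose t * (s+1) : ℕ) : ℝ) = (((s+1).choose t * (s+1-t) : ℕ) : ℝ) := by
      exact_mod_cast congrArg (fun m : ℕ => (m:ℝ)) (Nat.choose_mul_succ_eq s t)
    push_cast at h' ⊢
    linarith
  have step1 : (p / ((s:ℝ)+1)) * (((s + 1 - t : ℕ):ℝ) * (p ^ (s - t) / ((s.choose t : ℝ) * t)))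
      = (((s + 1 - t : ℕ):ℝ) * p ^ (s + 1 - t)) / (((s:ℝ)+1) * ((s.choose t : ℝ) * t)) := by
    rw [hpow]
    field_simp
  rw [step1, div_eq_div_iff (by positivity) (by positivity)]
  linear_combination (-(p ^ (s + 1 - t)) * (t:ℝ)) * hch
lemma telescope {α : Type*} [DecidableEq α] {p : ℝ} (hp : 0 ≤ p) (E : Finset α → ℝ) :
    ∀ s : ℕ, 1 ≤ s → ∀ A : Finset α, A.card = s →
    (∀ a ∈ A, 0 ≤ E {a} ∧ E {a} ≤ p) →
    |E A - ∏ a ∈ A, E {a}| ≤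
      ∑ B ∈ A.powerset.filter (fun B => 2 ≤ B.card), ∑ b ∈ B,
        p ^ (s - B.card) / ((s.choose B.card : ℝ) * B.card) *
          |E B - E (B.erase b) * E {b}| := by
  intro s
  induction s with
  | zero => intro h; omega
  | succ s IH =>
    intro _ A hcard hbound
    rcases Nat.eq_zero_or_pos s with hs0 | hs1
    · -- base case : A is a singleton
      subst hs0
      obtain ⟨a, rfl⟩ := Finset.card_eq_one.1 hcard
      rw [Finset.prod_singleton, sub_self, abs_zero]
      apply Finset.sum_nonneg; intro B hB
      apply Finset.sum_nonneg; intro b hb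
      have hC : (0:ℝ) ≤ ((1:ℕ).choose B.card : ℝ) * B.card := by positivity
      exact mul_nonneg (div_nonneg (pow_nonneg hp _) hC) (abs_nonneg _)
    -- main induction step
    have hs1R : (0:ℝ) < (s:ℝ) + 1 := by positivity
    set P := A.powerset.filter (fun B => 2 ≤ B.card) with hP
    set Df : Finset α → ℝ := fun B => ∑ b ∈ B, |E B - E (B.erase b) * E {b}| with hDf
    have hDfnn : ∀ B, 0 ≤ Df B := fun B => Finset.sum_nonneg fun b _ => abs_nonneg _
    set c : ℕ → ℝ := fun t => p ^ (s - t) / ((s.choose t : ℝ) * t) with hc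
    set Ra : α → ℝ := fun a => ∑ B ∈ (A.erase a).powerset.filter (fun B => 2 ≤ B.card),
      c B.card * Df B with hRa
    -- the averaged telescoping identity
    have hsum_id : E A - ∏ a ∈ A, E {a} =
        (∑ a ∈ A, ((E A - E (A.erase a) * E {a})
          + E {a} * (E (A.erase a) - ∏ x ∈ A.erase a, E {x}))) / ((s:ℝ)+1) := by
      rw [eq_div_iff hs1R.ne']
      rw [Finset.sum_congr rfl (fun a ha => by
        rw [show (E A - E (A.erase a) * E {a})
            + E {a} * (E (A.erase a) - ∏ x ∈ A.erase a, E {x})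
            = E A - E {a} * ∏ x ∈ A.erase a, E {x} by ring,
          Finset.mul_prod_erase A (fun x => E {x}) ha])]
      rw [Finset.sum_const, hcard, nsmul_eq_mul]
      push_cast; ring
    have h1 : |E A - ∏ a ∈ A, E {a}| ≤
        (∑ a ∈ A, (|E A - E (A.erase a) * E {a}|
          + p * |E (A.erase a) - ∏ x ∈ A.erase a, E {x}|)) / ((s:ℝ)+1) := by
      rw [hsum_id, abs_div, abs_of_pos hs1R]
      gcongr
      refine (Finset.abs_sum_le_sum_abs _ _).trans ?_
      apply Finset.sum_le_sum
      intro a ha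
      refine (abs_add_le _ _).trans ?_
      rw [abs_mul, abs_of_nonneg (hbound a ha).1]
      have := mul_le_mul_of_nonneg_right (hbound a ha).2
        (abs_nonneg (E (A.erase a) - ∏ x ∈ A.erase a, E {x}))
      linarith
    have hIH : ∀ a ∈ A, |E (A.erase a) - ∏ x ∈ A.erase a, E {x}| ≤ Ra a := by
      intro a ha
      have hcard' : (A.erase a).card = s := by
        rw [Finset.card_erase_of_mem ha, hcard]
        omega
      refine (IH hs1 (A.erase a) hcard'
        (fun x hx => hbound x (Finset.mem_of_mem_erase hx))).trans_eq ?_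
      apply Finset.sum_congr rfl; intro B hB
      simp only [hc, hDf]
      rw [Finset.mul_sum]
    have h2 : |E A - ∏ a ∈ A, E {a}| ≤ (Df A + p * ∑ a ∈ A, Ra a) / ((s:ℝ)+1) := by
      refine h1.trans ?_
      rw [Finset.sum_add_distrib, ← Finset.mul_sum]
      have e1 : ∑ a ∈ A, |E A - E (A.erase a) * E {a}| = Df A := rfl
      rw [e1]
      have hmul := mul_le_mul_of_nonneg_left (Finset.sum_le_sum hIH) hp
      exact (div_le_div_iff_of_pos_right hs1R).mpr (by linarith)
    -- interchange the double sum
    have hPB : ∀ a ∈ A, (A.erase a).powerset.filter (fun B => 2 ≤ B.card)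
        = P.filter (fun B => B ⊆ A.erase a) := by
      intro a ha; ext B
      simp only [hP, Finset.mem_filter, Finset.mem_powerset, Finset.subset_erase]
      tauto
    have hswap : ∑ a ∈ A, Ra a = ∑ B ∈ P, ((s + 1 - B.card : ℕ):ℝ) * (c B.card * Df B) := by
      calc ∑ a ∈ A, Ra a
          = ∑ a ∈ A, ∑ B ∈ P, (if B ⊆ A.erase a then c B.card * Df B else 0) := by
            apply Finset.sum_congr rfl; intro a ha
            simp only [hRa]
            rw [hPB a ha, Finset.sum_filter]
        _ = ∑ B ∈ P, ∑ a ∈ A, (if B ⊆ A.erase a then c B.card * Df B else 0) :=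
            Finset.sum_comm
        _ = ∑ B ∈ P, ((s + 1 - B.card : ℕ):ℝ) * (c B.card * Df B) := by
            apply Finset.sum_congr rfl; intro B hB
            have hBA : B ⊆ A := Finset.mem_powerset.1 (Finset.mem_filter.1 hB).1
            rw [← Finset.sum_filter]
            rw [show A.filter (fun a => B ⊆ A.erase a) = A \ B by
              ext x
              simp only [Finset.mem_filter, Finset.mem_sdiff, Finset.subset_erase]
              exact ⟨fun h => ⟨h.1, h.2.2⟩, fun h => ⟨h.1, hBA, h.2⟩⟩]
            rw [Finset.sum_const, nsmul_eq_mul, Finset.card_sdiff_of_subset hBA, hcard]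
    -- final reassembly
    have hAP : A ∈ P := Finset.mem_filter.2
      ⟨Finset.mem_powerset.2 (Finset.Subset.refl A), by rw [hcard]; omega⟩
    have hfinal : (Df A + p * ∑ a ∈ A, Ra a) / ((s:ℝ)+1)
        = ∑ B ∈ P, (p ^ (s + 1 - B.card) / (((s+1).choose B.card : ℝ) * B.card)) * Df B := by
      rw [hswap]
      have key : ∀ B ∈ P, (p ^ (s + 1 - B.card) / (((s+1).choose B.card : ℝ) * B.card)) * Df B
          = p * (((s + 1 - B.card : ℕ):ℝ) * (c B.card * Df B)) / ((s:ℝ)+1)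
            + (if B = A then Df A / ((s:ℝ)+1) else 0) := by
        intro B hB
        by_cases hBA : B = A
        · subst hBA
          rw [if_pos rfl, hcard]
          simp only [Nat.sub_self, Nat.cast_zero, Nat.choose_self, Nat.cast_one, pow_zero,
            one_mul, zero_mul, mul_zero, zero_div, zero_add]
          push_cast
          ring
        · rw [if_neg hBA, add_zero]
          have hBsub : B ⊆ A := Finset.mem_powerset.1 (Finset.mem_filter.1 hB).1
          have hlt : B.card < s + 1 := by
            rw [← hcard]
            exact Finset.card_lt_card ⟨hBsub, fun h => hBA (Finset.Subset.antisymm hBsub h)⟩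
          have ht2 : 2 ≤ B.card := (Finset.mem_filter.1 hB).2
          rw [hc]
          rw [coeff_id s B.card (by omega) (by omega)]
          ring
      rw [Finset.sum_congr rfl key, Finset.sum_add_distrib, Finset.sum_ite_eq' P A
        (fun _ => Df A / ((s:ℝ)+1)), if_pos hAP]
      rw [show ∀ S : Finset (Finset α), ∀ f : Finset α → ℝ,
        ∑ B ∈ S, p * f B / ((s:ℝ)+1) = p * (∑ B ∈ S, f B) / ((s:ℝ)+1) from
        fun S f => by rw [← Finset.sum_div, ← Finset.mul_sum]]
      ring
    refine h2.trans_eq (hfinal.trans ?_)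
    apply Finset.sum_congr rfl; intro B hB
    rw [hDf, Finset.mul_sum]
lemma cs_sqrt {ι : Type*} (s : Finset ι) (f g : ι → ℝ) (hf : ∀ i ∈ s, 0 ≤ f i)
    (hg : ∀ i ∈ s, 0 ≤ g i) :
    ∑ i ∈ s, f i * g i ≤ Real.sqrt (∑ i ∈ s, f i ^ 2) * Real.sqrt (∑ i ∈ s, g i ^ 2) := by
  have hnn : 0 ≤ ∑ i ∈ s, f i * g i :=
    Finset.sum_nonneg fun i hi => mul_nonneg (hf i hi) (hg i hi)
  calc ∑ i ∈ s, f i * g i = Real.sqrt ((∑ i ∈ s, f i * g i) ^ 2) := (Real.sqrt_sq hnn).symm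
    _ ≤ Real.sqrt ((∑ i ∈ s, f i ^ 2) * ∑ i ∈ s, g i ^ 2) :=
        Real.sqrt_le_sqrt (Finset.sum_mul_sq_le_sq_mul_sq s f g)
    _ = _ := Real.sqrt_mul (Finset.sum_nonneg fun i _ => sq_nonneg (f i)) _

lemma comb_bound {α : Type*} [DecidableEq α] (r : ℕ) (hr : 1 ≤ r) (A : Finset α)
    (hA : A.card = r) :
    ∑ B ∈ A.powerset.filter (fun B => 2 ≤ B.card), ∑ b ∈ B,
      (1:ℝ) / ((r.choose B.card : ℝ) * B.card) ≤ (r:ℝ) - 1 := by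
  have h1 : ∀ B ∈ A.powerset.filter (fun B => 2 ≤ B.card),
      ∑ b ∈ B, (1:ℝ)/((r.choose B.card :ℝ) * B.card) = 1/(r.choose B.card : ℝ) := by
    intro B hB
    have ht2 : 2 ≤ B.card := (Finset.mem_filter.1 hB).2
    have htne : (B.card : ℝ) ≠ 0 := Nat.cast_ne_zero.2 (by omega)
    rw [Finset.sum_const, nsmul_eq_mul, mul_one_div, mul_comm (r.choose B.card : ℝ),
      ← div_div, div_self htne]
  rw [Finset.sum_congr rfl h1]
  have hmaps : ∀ B ∈ A.powerset.filter (fun B => 2 ≤ B.card), B.card ∈ Finset.Icc 2 r := by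
    intro B hB
    obtain ⟨h1', h2'⟩ := Finset.mem_filter.1 hB
    exact Finset.mem_Icc.2 ⟨h2', hA ▸ Finset.card_le_card (Finset.mem_powerset.1 h1')⟩
  rw [← Finset.sum_fiberwise_of_maps_to hmaps (fun B => (1:ℝ)/(r.choose B.card : ℝ))]
  have h2 : ∀ j ∈ Finset.Icc 2 r,
      (∑ B ∈ (A.powerset.filter (fun B => 2 ≤ B.card)).filter (fun B => B.card = j),
        (1:ℝ)/(r.choose B.card : ℝ)) ≤ 1 := by
    intro j hj
    obtain ⟨hj2, hjr⟩ := Finset.mem_Icc.1 hj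
    have hCpos : (0:ℝ) < (r.choose j : ℝ) := Nat.cast_pos.2 (Nat.choose_pos hjr)
    have e1 : ∀ B ∈ (A.powerset.filter (fun B => 2 ≤ B.card)).filter (fun B => B.card = j),
        (1:ℝ)/(r.choose B.card : ℝ) = 1/(r.choose j : ℝ) := by
      intro B hB
      rw [(Finset.mem_filter.1 hB).2]
    rw [Finset.sum_congr rfl e1, Finset.sum_const, nsmul_eq_mul]
    have hsub : (A.powerset.filter (fun B => 2 ≤ B.card)).filter (fun B => B.card = j)
        ⊆ Finset.powersetCard j A := by
      intro B hB
      rw [Finset.powersetCard_eq_filter, Finset.mem_filter]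
      obtain ⟨hB1, hB2⟩ := Finset.mem_filter.1 hB
      exact ⟨(Finset.mem_filter.1 hB1).1, hB2⟩
    have hcardle : ((A.powerset.filter (fun B => 2 ≤ B.card)).filter
        (fun B => B.card = j)).card ≤ r.choose j := by
      refine le_trans (Finset.card_le_card hsub) ?_
      rw [Finset.card_powersetCard, hA]
    calc (((A.powerset.filter (fun B => 2 ≤ B.card)).filter (fun B => B.card = j)).card : ℝ)
          * (1/(r.choose j : ℝ))
        ≤ (r.choose j : ℝ) * (1/(r.choose j : ℝ)) := by
          apply mul_le_mul_of_nonneg_right _ (by positivity)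
          exact_mod_cast hcardle
      _ = 1 := by rw [mul_one_div, div_self hCpos.ne']
  calc ∑ j ∈ Finset.Icc 2 r, (∑ B ∈ (A.powerset.filter (fun B => 2 ≤ B.card)).filter
        (fun B => B.card = j), (1:ℝ)/(r.choose B.card : ℝ))
      ≤ ∑ j ∈ Finset.Icc 2 r, (1:ℝ) := Finset.sum_le_sum h2
    _ = ((Finset.Icc 2 r).card : ℝ) := by rw [Finset.sum_const, nsmul_eq_mul, mul_one]
    _ ≤ (r:ℝ) - 1 := by
        rw [Nat.card_Icc]
        have : r + 1 - 2 = r - 1 := by omega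
        rw [this, Nat.cast_sub hr]
        norm_num

lemma copy_card {k n : ℕ} (H : SimpleGraph (Fin k)) {A : Finset (Edge n)}
    (hA : A ∈ copySets H n) : A.card = H.edgeSet.ncard := by
  classical
  obtain ⟨-, f, hf⟩ := Finset.mem_filter.1 hA
  have hval : A.card = (A.image (Subtype.val)).card :=
    (Finset.card_image_of_injective A Subtype.val_injective).symm
  have him : A.image Subtype.val = H.edgeSet.toFinset.image (Sym2.map f) := by
    ext e
    simp only [Finset.mem_image, Set.mem_toFinset]
    constructor
    · rintro ⟨e', he', rfl⟩
      obtain ⟨u, v, huv, heq⟩ := (hf e').1 he'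
      exact ⟨s(u, v), huv, by rw [Sym2.map_pair_eq, ← heq]⟩
    · rintro ⟨e0, he0, rfl⟩
      induction e0 using Sym2.ind with
      | _ u v =>
        have huv : H.Adj u v := he0
        have hnd : ¬ (Sym2.map f s(u, v)).IsDiag := by
          rw [Sym2.map_pair_eq, Sym2.mk_isDiag_iff]
          exact fun h => huv.ne (f.injective h)
        refine ⟨⟨Sym2.map f s(u, v), hnd⟩, ?_, rfl⟩
        exact (hf _).2 ⟨u, v, huv, by
          show Sym2.map ⇑f s(u, v) = s(f u, f v)
          exact Sym2.map_pair_eq ⇑f u v⟩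
  rw [hval, him, Finset.card_image_of_injective _ (Sym2.map.injective f.injective),
    Set.ncard_eq_toFinset_card']
lemma stepCS' {α : Type*} [DecidableEq α] {p : ℝ} (hp : 0 < p) (r : ℕ) (hr1 : 1 ≤ r)
    (F : Finset (Finset α)) (hc : ∀ A ∈ F, A.card = r) (d : Finset α → α → ℝ) :
    (∑ A ∈ F, ∑ B ∈ A.powerset.filter (fun B => 2 ≤ B.card), ∑ b ∈ B,
        p ^ (r - B.card) / ((r.choose B.card : ℝ) * B.card) * |d B b|)
      ≤ Real.sqrt (p ^ (2*r) * (((r:ℝ) - 1) * F.card)) *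
        Real.sqrt (∑ A ∈ F, ∑ B ∈ A.powerset.filter (fun B => 2 ≤ B.card), ∑ b ∈ B,
          (d B b) ^ 2 / ((r.choose B.card : ℝ) * B.card * p ^ (2 * B.card))) := by
  classical
  set I := F.sigma (fun A => (A.powerset.filter (fun B => 2 ≤ B.card)).sigma
    (fun B => B)) with hI
  have flat : ∀ g : Finset α → Finset α → α → ℝ,
      ∑ x ∈ I, g x.1 x.2.1 x.2.2
        = ∑ A ∈ F, ∑ B ∈ A.powerset.filter (fun B => 2 ≤ B.card), ∑ b ∈ B, g A B b := by
    intro g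
    rw [hI, Finset.sum_sigma]
    exact Finset.sum_congr rfl fun A _ => by rw [Finset.sum_sigma]
  have hmemI : ∀ x ∈ I, x.1 ∈ F ∧ 2 ≤ x.2.1.card ∧ x.2.1.card ≤ r ∧ x.2.2 ∈ x.2.1 := by
    intro x hx
    rw [hI, Finset.mem_sigma] at hx
    obtain ⟨hxF, hx2⟩ := hx
    rw [Finset.mem_sigma] at hx2
    obtain ⟨hxB, hxb⟩ := hx2
    obtain ⟨hB1, hB2⟩ := Finset.mem_filter.1 hxB
    refine ⟨hxF, hB2, ?_, hxb⟩
    have := Finset.card_le_card (Finset.mem_powerset.1 hB1)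
    rwa [hc _ hxF] at this
  set uu : (Σ _ : Finset α, Σ _ : Finset α, α) → ℝ :=
    fun x => p ^ r / Real.sqrt ((r.choose x.2.1.card : ℝ) * x.2.1.card) with huu
  set vv : (Σ _ : Finset α, Σ _ : Finset α, α) → ℝ :=
    fun x => |d x.2.1 x.2.2| /
      (p ^ x.2.1.card * Real.sqrt ((r.choose x.2.1.card : ℝ) * x.2.1.card)) with hvv
  have huunn : ∀ x ∈ I, 0 ≤ uu x := fun x _ =>
    div_nonneg (pow_nonneg hp.le _) (Real.sqrt_nonneg _)
  have hvvnn : ∀ x ∈ I, 0 ≤ vv x := fun x _ =>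
    div_nonneg (abs_nonneg _) (mul_nonneg (pow_nonneg hp.le _) (Real.sqrt_nonneg _))
  have key1 : ∀ x ∈ I, uu x * vv x
      = p ^ (r - x.2.1.card) / ((r.choose x.2.1.card : ℝ) * x.2.1.card) * |d x.2.1 x.2.2| := by
    intro x hx
    obtain ⟨-, ht2, htr, -⟩ := hmemI x hx
    set t := x.2.1.card
    have hCt : (0:ℝ) < (r.choose t : ℝ) * t := by
      have c1 : (0:ℝ) < (r.choose t : ℝ) := Nat.cast_pos.2 (Nat.choose_pos htr)
      have c2 : (0:ℝ) < (t:ℝ) := Nat.cast_pos.2 (by omega)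
      positivity
    have hsq : Real.sqrt ((r.choose t : ℝ) * t) * Real.sqrt ((r.choose t : ℝ) * t)
        = (r.choose t : ℝ) * t := Real.mul_self_sqrt hCt.le
    have hsqpos : (0:ℝ) < Real.sqrt ((r.choose t : ℝ) * t) := Real.sqrt_pos.2 hCt
    have hppow : p ^ r = p ^ (r - t) * p ^ t := by
      rw [← pow_add]; congr 1; omega
    have hpt : (0:ℝ) < p ^ t := pow_pos hp _
    rw [huu, hvv]
    show p ^ r / Real.sqrt ((r.choose t : ℝ) * t) *
        (|d x.2.1 x.2.2| / (p ^ t * Real.sqrt ((r.choose t : ℝ) * t)))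
      = p ^ (r - t) / ((r.choose t : ℝ) * t) * |d x.2.1 x.2.2|
    rw [hppow]
    rw [div_mul_div_comm]
    rw [show Real.sqrt ((r.choose t : ℝ) * t) * (p ^ t * Real.sqrt ((r.choose t : ℝ) * t))
        = ((r.choose t : ℝ) * t) * p ^ t by rw [mul_comm (p ^ t), ← mul_assoc, hsq]]
    rw [div_mul_eq_mul_div, div_eq_div_iff (mul_pos hCt hpt).ne' hCt.ne']
    ring
  have key2 : ∀ x ∈ I, (uu x) ^ 2
      = p ^ (2*r) * ((1:ℝ) / ((r.choose x.2.1.card : ℝ) * x.2.1.card)) := by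
    intro x _
    set t := x.2.1.card
    have hCt : (0:ℝ) ≤ (r.choose t : ℝ) * t := by positivity
    rw [huu]
    show (p ^ r / Real.sqrt ((r.choose t : ℝ) * t)) ^ 2 = _
    rw [div_pow, Real.sq_sqrt hCt, ← pow_mul, mul_comm r 2, mul_one_div]
  have key3 : ∀ x ∈ I, (vv x) ^ 2
      = (d x.2.1 x.2.2) ^ 2
        / ((r.choose x.2.1.card : ℝ) * x.2.1.card * p ^ (2 * x.2.1.card)) := by
    intro x _
    set t := x.2.1.card
    have hCt : (0:ℝ) ≤ (r.choose t : ℝ) * t := by positivity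
    rw [hvv]
    show (|d x.2.1 x.2.2| / (p ^ t * Real.sqrt ((r.choose t : ℝ) * t))) ^ 2 = _
    rw [div_pow, sq_abs, mul_pow, Real.sq_sqrt hCt, ← pow_mul, mul_comm t 2,
      mul_comm (p ^ (2*t))]
  calc (∑ A ∈ F, ∑ B ∈ A.powerset.filter (fun B => 2 ≤ B.card), ∑ b ∈ B,
        p ^ (r - B.card) / ((r.choose B.card : ℝ) * B.card) * |d B b|)
      = ∑ x ∈ I, uu x * vv x := by
        rw [Finset.sum_congr rfl key1]
        exact (flat (fun A B b => p ^ (r - B.card) / ((r.choose B.card : ℝ) * B.card)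
          * |d B b|)).symm
    _ ≤ Real.sqrt (∑ x ∈ I, (uu x) ^ 2) * Real.sqrt (∑ x ∈ I, (vv x) ^ 2) :=
        cs_sqrt I uu vv huunn hvvnn
    _ ≤ _ := by
        have e2 : ∑ x ∈ I, (uu x) ^ 2 ≤ p ^ (2*r) * (((r:ℝ) - 1) * F.card) := by
          rw [Finset.sum_congr rfl key2,
            flat (fun A B b => p ^ (2*r) * ((1:ℝ) / ((r.choose B.card : ℝ) * B.card)))]
          have hperA : ∀ A ∈ F,
              (∑ B ∈ A.powerset.filter (fun B => 2 ≤ B.card), ∑ b ∈ B,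
                p ^ (2*r) * ((1:ℝ) / ((r.choose B.card : ℝ) * B.card)))
              ≤ p ^ (2*r) * ((r:ℝ) - 1) := by
            intro A hAF
            have hcb := comb_bound r hr1 A (hc A hAF)
            calc (∑ B ∈ A.powerset.filter (fun B => 2 ≤ B.card), ∑ b ∈ B,
                  p ^ (2*r) * ((1:ℝ) / ((r.choose B.card : ℝ) * B.card)))
                = p ^ (2*r) * ∑ B ∈ A.powerset.filter (fun B => 2 ≤ B.card), ∑ b ∈ B,
                  (1:ℝ) / ((r.choose B.card : ℝ) * B.card) := by
                  rw [Finset.mul_sum]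
                  exact Finset.sum_congr rfl fun B _ => by rw [Finset.mul_sum]
              _ ≤ p ^ (2*r) * ((r:ℝ) - 1) :=
                  mul_le_mul_of_nonneg_left hcb (pow_nonneg hp.le _)
          calc ∑ A ∈ F, (∑ B ∈ A.powerset.filter (fun B => 2 ≤ B.card), ∑ b ∈ B,
                p ^ (2*r) * ((1:ℝ) / ((r.choose B.card : ℝ) * B.card)))
              ≤ ∑ _A ∈ F, p ^ (2*r) * ((r:ℝ) - 1) := Finset.sum_le_sum hperA
            _ = p ^ (2*r) * (((r:ℝ) - 1) * F.card) := by
                rw [Finset.sum_const, nsmul_eq_mul]; ring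
        have e3 : ∑ x ∈ I, (vv x) ^ 2 = ∑ A ∈ F,
            ∑ B ∈ A.powerset.filter (fun B => 2 ≤ B.card), ∑ b ∈ B,
              (d B b) ^ 2 / ((r.choose B.card : ℝ) * B.card * p ^ (2 * B.card)) := by
          rw [Finset.sum_congr rfl key3]
          exact flat (fun A B b => (d B b) ^ 2
            / ((r.choose B.card : ℝ) * B.card * p ^ (2 * B.card)))
        rw [e3]
        exact mul_le_mul_of_nonneg_right (Real.sqrt_le_sqrt e2) (Real.sqrt_nonneg _)
lemma weight_cs {ι : Type*} [Fintype ι] (μ e : ι → ℝ) (hμ : ∀ i, 0 ≤ μ i)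
    (he : ∀ i, 0 ≤ e i) (hsum : ∑ i : ι, μ i ≤ 1) :
    ∑ i : ι, μ i * Real.sqrt (e i) ≤ Real.sqrt (∑ i : ι, μ i * e i) := by
  have hcs := cs_sqrt Finset.univ (fun i => Real.sqrt (μ i))
    (fun i => Real.sqrt (μ i) * Real.sqrt (e i))
    (fun i _ => Real.sqrt_nonneg _)
    (fun i _ => mul_nonneg (Real.sqrt_nonneg _) (Real.sqrt_nonneg _))
  have e1 : ∀ i : ι, Real.sqrt (μ i) * (Real.sqrt (μ i) * Real.sqrt (e i))
      = μ i * Real.sqrt (e i) := by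
    intro i
    rw [← mul_assoc, Real.mul_self_sqrt (hμ i)]
  have e2 : ∀ i : ι, (Real.sqrt (μ i)) ^ 2 = μ i := fun i => Real.sq_sqrt (hμ i)
  have e3 : ∀ i : ι, (Real.sqrt (μ i) * Real.sqrt (e i)) ^ 2 = μ i * e i := by
    intro i
    rw [mul_pow, Real.sq_sqrt (hμ i), Real.sq_sqrt (he i)]
  rw [Finset.sum_congr rfl (fun i _ => (e1 i).symm)]
  refine hcs.trans ?_
  rw [Finset.sum_congr rfl (fun i _ => e2 i), Finset.sum_congr rfl (fun i _ => e3 i)]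
  calc Real.sqrt (∑ i : ι, μ i) * Real.sqrt (∑ i : ι, μ i * e i)
      ≤ 1 * Real.sqrt (∑ i : ι, μ i * e i) :=
        mul_le_mul_of_nonneg_right (Real.sqrt_le_one.mpr hsum) (Real.sqrt_nonneg _)
    _ = Real.sqrt (∑ i : ι, μ i * e i) := one_mul _

/-- Cauchy–Schwarz correlation bound. -/
theorem statement3 {k : ℕ} (H : SimpleGraph (Fin k)) (hH : H.edgeSet.Nonempty)
    (n : ℕ) (p η : ℝ) (hp : p ∈ Set.Ioo (0:ℝ) 1) (hη : η ∈ Set.Ioc (0:ℝ) 1)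
    (W : Finset (Edge n)) :
    (∑ G0 : EGraph n, ltPMF H n p η G0 *
      ∑ A ∈ (copySets H n).filter (fun A => Disjoint A W),
        |condExpW (ltPMF H n p η) W (YA A) G0 -
          ∏ a ∈ A, condExpW (ltPMF H n p η) W (YA {a}) G0|)
      ≤ p ^ H.edgeSet.ncard *
        Real.sqrt (((H.edgeSet.ncard : ℝ) - 1) *
          (((copySets H n).filter (fun A => Disjoint A W)).card : ℝ)) *
        Real.sqrt (energy H (ltPMF H n p η) p W) := by
  classical
  set μ := ltPMF H n p η with hμ
  set r := H.edgeSet.ncard with hrdef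
  have hr1 : 1 ≤ r := by
    rw [hrdef]
    exact (Set.ncard_pos (Set.toFinite _)).2 hH
  set F := (copySets H n).filter (fun A => Disjoint A W) with hF
  have hcF : ∀ A ∈ F, A.card = r := fun A hA => copy_card H (Finset.mem_filter.1 hA).1
  have hμnn : ∀ G, 0 ≤ μ G := fun G => ltPMF_nonneg H hp η G
  set eG : EGraph n → ℝ := fun G0 => ∑ A ∈ F,
    ∑ B ∈ A.powerset.filter (fun B => 2 ≤ B.card), ∑ b ∈ B,
      (DW μ W B b G0) ^ 2 / ((r.choose B.card : ℝ) * B.card * p ^ (2 * B.card)) with heG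
  have heGnn : ∀ G0, 0 ≤ eG G0 := by
    intro G0
    refine Finset.sum_nonneg fun A _ => Finset.sum_nonneg fun B _ =>
      Finset.sum_nonneg fun b _ => div_nonneg (sq_nonneg _) ?_
    have := hp.1.le
    positivity
  have henergy : energy H μ p W = ∑ G0 : EGraph n, μ G0 * eG G0 := rfl
  -- Step A : telescoping bound for each copy A and each outcome G0
  have stepA : ∀ G0 : EGraph n, ∀ A ∈ F,
      |condExpW μ W (YA A) G0 - ∏ a ∈ A, condExpW μ W (YA {a}) G0| ≤
        ∑ B ∈ A.powerset.filter (fun B => 2 ≤ B.card), ∑ b ∈ B,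
          p ^ (r - B.card) / ((r.choose B.card : ℝ) * B.card) * |DW μ W B b G0| := by
    intro G0 A hAF
    obtain ⟨hAc, hdisj⟩ := Finset.mem_filter.1 hAF
    have hcardA : A.card = r := copy_card H hAc
    have hb : ∀ a ∈ A, 0 ≤ condExpW μ W (YA {a}) G0 ∧ condExpW μ W (YA {a}) G0 ≤ p := by
      intro a ha
      have haW : a ∉ W := Finset.disjoint_left.1 hdisj ha
      exact ⟨condExpW_edge_nonneg μ hμnn W a G0, harris H hp η W haW G0⟩
    exact telescope hp.1.le (fun B => condExpW μ W (YA B) G0) r hr1 A hcardA hb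
  -- Step B : Cauchy–Schwarz for each outcome G0
  have stepB : ∀ G0 : EGraph n,
      (∑ A ∈ F, |condExpW μ W (YA A) G0 - ∏ a ∈ A, condExpW μ W (YA {a}) G0|)
      ≤ Real.sqrt (p ^ (2*r) * (((r:ℝ) - 1) * F.card)) * Real.sqrt (eG G0) := by
    intro G0
    refine le_trans (Finset.sum_le_sum (stepA G0)) ?_
    exact stepCS' hp.1 r hr1 F hcF (fun B b => DW μ W B b G0)
  -- assemble
  have main1 : (∑ G0 : EGraph n, μ G0 * ∑ A ∈ F,
      |condExpW μ W (YA A) G0 - ∏ a ∈ A, condExpW μ W (YA {a}) G0|)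
      ≤ Real.sqrt (p ^ (2*r) * (((r:ℝ) - 1) * F.card)) *
        ∑ G0 : EGraph n, μ G0 * Real.sqrt (eG G0) := by
    rw [Finset.mul_sum]
    apply Finset.sum_le_sum
    intro G0 _
    calc μ G0 * ∑ A ∈ F, |condExpW μ W (YA A) G0 - ∏ a ∈ A, condExpW μ W (YA {a}) G0|
        ≤ μ G0 * (Real.sqrt (p ^ (2*r) * (((r:ℝ) - 1) * F.card)) * Real.sqrt (eG G0)) :=
          mul_le_mul_of_nonneg_left (stepB G0) (hμnn G0)
      _ = Real.sqrt (p ^ (2*r) * (((r:ℝ) - 1) * F.card)) * (μ G0 * Real.sqrt (eG G0)) := by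
          ring
  have main2 : ∑ G0 : EGraph n, μ G0 * Real.sqrt (eG G0)
      ≤ Real.sqrt (energy H μ p W) := by
    rw [henergy]
    exact weight_cs μ eG hμnn heGnn (sum_ltPMF_le_one H p η)
  have hsqrtsplit : Real.sqrt (p ^ (2*r) * (((r:ℝ) - 1) * F.card))
      = p ^ r * Real.sqrt (((r:ℝ) - 1) * F.card) := by
    rw [Real.sqrt_mul (pow_nonneg hp.1.le _), mul_comm 2 r, pow_mul,
      Real.sqrt_sq (pow_nonneg hp.1.le _)]
  calc (∑ G0 : EGraph n, μ G0 * ∑ A ∈ F,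
        |condExpW μ W (YA A) G0 - ∏ a ∈ A, condExpW μ W (YA {a}) G0|)
      ≤ Real.sqrt (p ^ (2*r) * (((r:ℝ) - 1) * F.card)) *
        ∑ G0 : EGraph n, μ G0 * Real.sqrt (eG G0) := main1
    _ ≤ Real.sqrt (p ^ (2*r) * (((r:ℝ) - 1) * F.card)) * Real.sqrt (energy H μ p W) :=
        mul_le_mul_of_nonneg_left main2 (Real.sqrt_nonneg _)
    _ = p ^ r * Real.sqrt (((r:ℝ) - 1) * F.card) * Real.sqrt (energy H μ p W) := by
        rw [hsqrtsplit]

end LowerTails
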